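/- For the automaton A(m, k), the word v = a(ba^m)^{m-1}ba is synchronizing when k relates so that the Extension Algorithm with C_s = {q₀, q₁}, v_s = ba, C_e = {q₀, …, q_m}, v_e = a produces it; moreover |v| = m² + 2, and (for A(m,k) with n = m+k+1 states) this word is a shortest synchronizing word, so the shortest synchronizing word of A(m,k) has length exactly (n - k - 1)² + 2. -/

import Mathlib

/-- State set of the automaton `A(m,k)`: `Sum.inl i` is `qᵢ` (i = 0,…,m) and
`Sum.inr j` is `s_{j+1}` (j = 0,…,k-1). -/
abbrev QA (m k : ℕ) := Fin (m + 1) ⊕ Fin k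

/-- Transition function of `A(m,k)`; letter `false` is `a`, letter `true` is `b`.
`a`: qᵢ → q_{i+1 mod m+1}, sⱼ → q₂.  `b`: q₀ → s₁, sⱼ → s_{j+1} (j < k), s_k → q₀;
all other transitions are self-loops. -/
def deltaA (m k : ℕ) : QA m k → Bool → QA m k
  | Sum.inl i, false => Sum.inl (i + 1)
  | Sum.inr _, false => Sum.inl 2
  | Sum.inl i, true =>
      if i = 0 then (if h : 0 < k then Sum.inr ⟨0, h⟩ else Sum.inl 0) else Sum.inl i
  | Sum.inr j, true =>
      if h : (j : ℕ) + 1 < k then Sum.inr ⟨(j : ℕ) + 1, h⟩ else Sum.inl 0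

/-- Action of a word on a state of `A(m,k)`. -/
def actA (m k : ℕ) (q : QA m k) (w : List Bool) : QA m k := w.foldl (deltaA m k) q

/-- Preimage `S·w⁻¹ = {q : q·w ∈ S}`. -/
def preimA (m k : ℕ) (S : Finset (QA m k)) (w : List Bool) : Finset (QA m k) :=
  Finset.univ.filter fun q => actA m k q w ∈ S

/-- `C_b = {q₀, s₁, …, s_k}`, the set of states moved by `b`. -/
def Cb (m k : ℕ) : Finset (QA m k) :=
  insert (Sum.inl 0) ((Finset.univ : Finset (Fin k)).image Sum.inr)

namespace Stmt17Aux

open Fin.NatCast Fin.CommRing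

section EllSec

/-! ### The interval potential on `Fin (m+1)` -/

variable (m : ℕ)

/-- cyclic interval `{i, i+1, …, i+r-1}` in `Fin (m+1)`. -/
def itv (i : Fin (m + 1)) (r : ℕ) : Finset (Fin (m + 1)) :=
  (Finset.range r).image (fun t : ℕ => i + (t : Fin (m + 1)))

/-- rotation offset of a start position. -/
def off (i : Fin (m + 1)) : ℕ := if i.val = 0 then 0 else m + 1 - i.val

/-- value of an interval. -/
def ival (i : Fin (m + 1)) (r : ℕ) : ℕ := 2 + (r - 2) * (m + 1) + off m i

/-- candidate covering intervals. -/
def cands (T : Finset (Fin (m + 1))) : Finset (Fin (m + 1) × ℕ) :=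
  (Finset.univ ×ˢ Finset.Icc 2 (m + 1)).filter fun p => T ⊆ itv m p.1 p.2

lemma mem_itv {i : Fin (m + 1)} {r : ℕ} {x : Fin (m + 1)} :
    x ∈ itv m i r ↔ ∃ t, t < r ∧ x = i + (t : Fin (m + 1)) := by
  simp only [itv, Finset.mem_image, Finset.mem_range]
  constructor
  · rintro ⟨t, ht, rfl⟩; exact ⟨t, ht, rfl⟩
  · rintro ⟨t, ht, rfl⟩; exact ⟨t, ht, rfl⟩

lemma itv_top (x : Fin (m + 1)) : x ∈ itv m 0 (m + 1) := by
  rw [mem_itv]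
  exact ⟨x.val, x.isLt, by rw [zero_add, Fin.cast_val_eq_self]⟩

lemma cands_nonempty (hm : 1 ≤ m) (T : Finset (Fin (m + 1))) : (cands m T).Nonempty := by
  refine ⟨(0, m + 1), ?_⟩
  simp only [cands, Finset.mem_filter, Finset.mem_product, Finset.mem_univ, Finset.mem_Icc]
  exact ⟨⟨trivial, by omega⟩, fun x _ => itv_top m x⟩

variable (hm : 1 ≤ m)

/-- the potential. -/
def ell (hm : 1 ≤ m) (T : Finset (Fin (m + 1))) : ℕ :=
  if T.card ≤ 1 then 0 else (cands m T).inf' (cands_nonempty m hm T) (fun p => ival m p.1 p.2)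

lemma ell_le {T : Finset (Fin (m + 1))} (h2 : 2 ≤ T.card) {i : Fin (m + 1)} {r : ℕ}
    (hr : 2 ≤ r) (hr2 : r ≤ m + 1) (hsub : T ⊆ itv m i r) : ell m hm T ≤ ival m i r := by
  rw [ell, if_neg (by omega)]
  have hmem : (i, r) ∈ cands m T := by
    rw [cands, Finset.mem_filter]
    refine ⟨?_, hsub⟩
    rw [Finset.mem_product]
    exact ⟨Finset.mem_univ _, Finset.mem_Icc.mpr ⟨hr, hr2⟩⟩
  exact Finset.inf'_le _ hmem

lemma ell_spec {T : Finset (Fin (m + 1))} (h2 : 2 ≤ T.card) :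
    ∃ i r, 2 ≤ r ∧ r ≤ m + 1 ∧ T ⊆ itv m i r ∧ ell m hm T = ival m i r := by
  rw [ell, if_neg (by omega)]
  obtain ⟨p, hp, heq⟩ := Finset.exists_mem_eq_inf' (cands_nonempty m hm T)
    (fun p => ival m p.1 p.2)
  simp only [cands, Finset.mem_filter, Finset.mem_product, Finset.mem_univ, Finset.mem_Icc] at hp
  exact ⟨p.1, p.2, hp.1.2.1, hp.1.2.2, hp.2, heq⟩

lemma ell_card_le_one {T : Finset (Fin (m + 1))} (h : T.card ≤ 1) : ell m hm T = 0 :=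
  if_pos h

/-- shifting membership down. -/
lemma mem_itv_shift {i : Fin (m + 1)} {r : ℕ} {x : Fin (m + 1)}
    (h : x + 1 ∈ itv m i r) : x ∈ itv m (i - 1) r := by
  rw [mem_itv] at h ⊢
  obtain ⟨t, ht, hx⟩ := h
  refine ⟨t, ht, ?_⟩
  have : x + 1 - 1 = (i - 1) + ↑t + 1 - 1 := by rw [hx]; ring
  simpa using this

lemma off_sub_one (i : Fin (m + 1)) : off m (i - 1) ≤ off m i + 1 := by
  have h1 : ((i - 1 : Fin (m + 1)) : ℕ) = if i = 0 then m else i.val - 1 := Fin.coe_sub_one i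
  have h0 : i.val < m + 1 := i.isLt
  by_cases hi : i = 0
  · rw [if_pos hi] at h1
    rw [off, off, h1, hi]
    simp only [Fin.val_zero, if_pos rfl]
    split_ifs <;> omega
  · rw [if_neg hi] at h1
    have hv : i.val ≠ 0 := fun h => hi (Fin.ext (by simp [h]))
    rw [off, off, h1]
    split_ifs <;> omega

lemma ell_shift (T : Finset (Fin (m + 1))) :
    ell m hm T ≤ ell m hm (T.image (· + 1)) + 1 := by
  by_cases hc : T.card ≤ 1
  · rw [ell_card_le_one m hm hc]; exact Nat.zero_le _
  · have hcard : (T.image (· + 1)).card = T.card :=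
      Finset.card_image_of_injective _ (add_left_injective 1)
    obtain ⟨i, r, hr, hr2, hsub, heq⟩ := ell_spec m hm (T := T.image (· + 1)) (by omega)
    have hsub' : T ⊆ itv m (i - 1) r := fun x hx =>
      mem_itv_shift m (hsub (Finset.mem_image_of_mem _ hx))
    calc ell m hm T ≤ ival m (i - 1) r := ell_le m hm (by omega) hr hr2 hsub'
      _ ≤ ival m i r + 1 := by
          rw [ival, ival]; have := off_sub_one m i; omega
      _ = _ := by rw [heq]

lemma ell_bmove {T : Finset (Fin (m + 1))} (h0 : (0 : Fin (m + 1)) ∈ T) :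
    ell m hm T ≤ ell m hm (insert 2 ((T.erase 0).image (· + 1))) + 2 := by
  set Bt := insert 2 ((T.erase 0).image (· + 1)) with hBt
  by_cases hc : T.card ≤ 1
  · rw [ell_card_le_one m hm hc]; exact Nat.zero_le _
  by_cases hb : Bt.card ≤ 1
  · -- then Bt = {2} and T ⊆ {0,1}
    have hT01 : T ⊆ itv m 0 2 := by
      intro x hx
      rw [mem_itv]
      by_cases hx0 : x = 0
      · exact ⟨0, by omega, by rw [hx0]; simp⟩
      · have hmem : x + 1 ∈ Bt := Finset.mem_insert_of_mem
          (Finset.mem_image_of_mem _ (Finset.mem_erase.mpr ⟨hx0, hx⟩))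
        have h2B : (2 : Fin (m + 1)) ∈ Bt := Finset.mem_insert_self _ _
        have he : x + 1 = 2 := Finset.card_le_one.mp hb _ hmem _ h2B
        have hx1 : x = 1 := by
          have h2 : (2 : Fin (m + 1)) = 1 + 1 := by norm_num
          rw [h2] at he
          exact add_right_cancel he
        exact ⟨1, by omega, by rw [hx1]; simp⟩
    have : ell m hm T ≤ ival m 0 2 := ell_le m hm (by omega) (le_refl 2) (by omega) hT01
    have hv2 : ival m 0 2 = 2 := by rw [ival, off]; simp
    omega
  · obtain ⟨i, r, hr, hr2, hsub, heq⟩ := ell_spec m hm (T := Bt) (by omega)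
    by_cases h0' : (0 : Fin (m + 1)) ∈ itv m (i - 1) r
    · have hsubT : T ⊆ itv m (i - 1) r := by
        intro x hx
        by_cases hx0 : x = 0
        · rw [hx0]; exact h0'
        · exact mem_itv_shift m (hsub (Finset.mem_insert_of_mem
            (Finset.mem_image_of_mem _ (Finset.mem_erase.mpr ⟨hx0, hx⟩))))
      have h1 : ell m hm T ≤ ival m (i - 1) r := ell_le m hm (by omega) hr hr2 hsubT
      have h2 : ival m (i - 1) r ≤ ival m i r + 1 := by
        rw [ival, ival]; have := off_sub_one m i; omega
      omega
    · -- 0 ∉ itv m (i-1) r : then i = 2, r ≤ m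
      have h2B : (2 : Fin (m + 1)) ∈ itv m i r := hsub (Finset.mem_insert_self _ _)
      obtain ⟨t0, ht0, h2eq⟩ := (mem_itv m).mp h2B
      have ht00 : t0 = 0 := by
        by_contra hne
        apply h0'
        rw [mem_itv]
        refine ⟨t0 - 1, by omega, ?_⟩
        have hcast : ((t0 : ℕ) : Fin (m + 1)) = ((t0 - 1 : ℕ) : Fin (m + 1)) + 1 := by
          have ht : t0 = (t0 - 1) + 1 := by omega
          conv_lhs => rw [ht]
          push_cast
          ring
        rw [hcast] at h2eq
        linear_combination h2eq
      have hi2 : i = 2 := by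
        rw [ht00] at h2eq
        simpa using h2eq.symm
      have hrm : r ≤ m := by
        by_contra hcon
        apply h0'
        rw [mem_itv]
        refine ⟨((0 : Fin (m + 1)) - (i - 1)).val,
          by have hlt := ((0 : Fin (m + 1)) - (i - 1)).isLt; omega, ?_⟩
        rw [Fin.cast_val_eq_self]
        ring
      have hsubT : T ⊆ itv m 0 (r + 1) := by
        intro x hx
        rw [mem_itv]
        by_cases hx0 : x = 0
        · exact ⟨0, by omega, by rw [hx0]; simp⟩
        · have hmem : x + 1 ∈ itv m i r := hsub (Finset.mem_insert_of_mem
            (Finset.mem_image_of_mem _ (Finset.mem_erase.mpr ⟨hx0, hx⟩)))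
          obtain ⟨t, ht, hxe⟩ := (mem_itv m).mp hmem
          refine ⟨t + 1, by omega, ?_⟩
          rw [hi2] at hxe
          have hx1 : x = 1 + (t : Fin (m + 1)) := by linear_combination hxe
          rw [hx1]
          push_cast
          ring
      have hm2 : 2 ≤ m := le_trans hr hrm
      have h2v : ((2 : Fin (m + 1)) : ℕ) = 2 := by
        have : ((2 : ℕ) : Fin (m + 1)) = (2 : Fin (m + 1)) := by push_cast; ring
        rw [← this, Fin.val_cast_of_lt (by omega)]
      have hval : ival m 0 (r + 1) = ival m i r + 2 := by
        have hoff0 : off m 0 = 0 := by rw [off]; simp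
        have hoff2 : off m (2 : Fin (m + 1)) = m - 1 := by
          rw [off, h2v, if_neg (by omega)]
          omega
        have hr1 : r + 1 - 2 = (r - 2) + 1 := by omega
        rw [hi2, ival, ival, hoff0, hoff2, hr1, add_mul]
        omega
      have hle : ell m hm T ≤ ival m 0 (r + 1) :=
        ell_le m hm (by omega) (by omega) (by omega) hsubT
      omega

lemma ell_univ_ge : m ^ 2 + 1 ≤ ell m hm (Finset.univ : Finset (Fin (m + 1))) := by
  have hcard : (Finset.univ : Finset (Fin (m + 1))).card = m + 1 := by
    rw [Finset.card_univ, Fintype.card_fin]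
  rw [ell, if_neg (by omega)]
  apply Finset.le_inf'
  intro p hp
  rw [cands, Finset.mem_filter, Finset.mem_product, Finset.mem_Icc] at hp
  obtain ⟨⟨-, h2r, hrn⟩, hsub⟩ := hp
  have hbig : m + 1 ≤ p.2 := by
    have h1 : (Finset.univ : Finset (Fin (m + 1))).card ≤ (itv m p.1 p.2).card :=
      Finset.card_le_card hsub
    have h2 : (itv m p.1 p.2).card ≤ p.2 := by
      rw [itv]
      exact le_trans (Finset.card_image_le) (by rw [Finset.card_range])
    omega
  have hp2 : p.2 = m + 1 := by omega
  rw [ival, hp2]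
  obtain ⟨m', rfl⟩ : ∃ m', m = m' + 1 := ⟨m - 1, by omega⟩
  have h0 : m' + 1 + 1 - 2 = m' := by omega
  have : (m' + 1 + 1 - 2) * (m' + 1 + 1) = m' * m' + 2 * m' := by rw [h0]; ring
  rw [this]
  have hsq : (m' + 1) ^ 2 = m' * m' + 2 * m' + 1 := by ring
  omega


end EllSec

/-! ### Configurations -/

/-- actual state of the cycle element: `c = 0` is `q₀`, `c = j ≥ 1` is `s_j`. -/
def stOf (m k : ℕ) (c : Fin (k + 1)) : QA m k :=
  if h : c.val = 0 then Sum.inl 0 else Sum.inr ⟨c.val - 1, by have := c.isLt; omega⟩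

/-- effect of letter `b` on the cycle position. -/
def bPhi (k : ℕ) (c : Fin (k + 1)) : Fin (k + 1) :=
  if h : c.val < k then ⟨c.val + 1, by omega⟩ else 0

/-- the set of states of a configuration. -/
def RC (m k : ℕ) (U : Finset (Fin (m + 1))) (φ : Option (Fin (k + 1))) (x : QA m k) : Prop :=
  (∃ i ∈ U, x = Sum.inl i) ∨ (∃ c, φ = some c ∧ x = stOf m k c)

def shiftU (m : ℕ) (U : Finset (Fin (m + 1))) : Finset (Fin (m + 1)) := U.image (· + 1)

/-- the potential of a configuration. -/
def psi (m k : ℕ) (hm : 1 ≤ m) (U : Finset (Fin (m + 1))) : Option (Fin (k + 1)) → ℕ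
  | none => ell m hm U
  | some c =>
      if c.val = 0 then ell m hm (insert 0 U)
      else if U = ∅ then 0
      else min (1 + ell m hm (insert 2 (shiftU m U))) ((k - c.val) + ell m hm (insert 0 U))

variable {m k : ℕ}

lemma actA_cons (x : QA m k) (l : Bool) (w : List Bool) :
    actA m k x (l :: w) = actA m k (deltaA m k x l) w := rfl

lemma delta_inl_a (i : Fin (m + 1)) : deltaA m k (Sum.inl i) false = Sum.inl (i + 1) := rfl

lemma delta_inr_a (j : Fin k) : deltaA m k (Sum.inr j) false = Sum.inl 2 := rfl

lemma delta_inl_b (i : Fin (m + 1)) (hi : i ≠ 0) :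
    deltaA m k (Sum.inl i) true = Sum.inl i := by
  simp [deltaA, hi]

lemma delta_stOf (hk : 1 ≤ k) (c : Fin (k + 1)) :
    deltaA m k (stOf m k c) true = stOf m k (bPhi k c) := by
  by_cases hc0 : c.val = 0
  · have hb : (bPhi k c).val = 1 := by
      rw [bPhi, dif_pos (by omega)]
      show c.val + 1 = 1
      omega
    rw [stOf, dif_pos hc0, stOf, dif_neg (by omega)]
    have hd : deltaA m k (Sum.inl (0 : Fin (m+1))) true = Sum.inr ⟨0, show 0 < k by omega⟩ := by
      simp [deltaA, show 0 < k by omega]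
    rw [hd]
    congr 1
    refine Fin.ext ?_
    show (0 : ℕ) = (bPhi k c).val - 1
    omega
  · by_cases hck : c.val < k
    · have hb : (bPhi k c).val = c.val + 1 := by rw [bPhi, dif_pos hck]
      rw [stOf, dif_neg hc0, stOf, dif_neg (by omega)]
      simp only [deltaA]
      rw [dif_pos (show (c.val - 1) + 1 < k by omega)]
      congr 1
      refine Fin.ext ?_
      show (c.val - 1) + 1 = (bPhi k c).val - 1
      omega
    · have hck' : c.val = k := by have := c.isLt; omega
      have hb : (bPhi k c).val = 0 := by rw [bPhi, dif_neg hck]; rfl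
      rw [stOf, dif_neg hc0, stOf, dif_pos hb]
      simp only [deltaA]
      rw [dif_neg (show ¬ ((c.val - 1) + 1 < k) by omega)]

lemma stOf_zero : stOf m k (0 : Fin (k + 1)) = Sum.inl 0 := by
  rw [stOf, dif_pos (by simp)]

/-- value of the pure configuration associated to a pure `q`-set. -/
lemma psi_pure (hm : 1 ≤ m) (P : Finset (Fin (m + 1))) :
    psi m k hm (P.erase 0)
      (if (0 : Fin (m + 1)) ∈ P then (some (0 : Fin (k + 1))) else none) = ell m hm P := by
  by_cases h : (0 : Fin (m + 1)) ∈ P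
  · rw [if_pos h]
    simp only [psi]
    rw [if_pos (by simp), Finset.insert_erase h]
  · rw [if_neg h]
    simp only [psi]
    rw [Finset.erase_eq_of_notMem h]

lemma RC_pure (P : Finset (Fin (m + 1))) (y : QA m k)
    (hy : RC m k (P.erase 0)
      (if (0 : Fin (m + 1)) ∈ P then (some (0 : Fin (k + 1))) else none) y) :
    ∃ i ∈ P, y = Sum.inl i := by
  rcases hy with ⟨i, hi, rfl⟩ | ⟨c, hc, rfl⟩
  · exact ⟨i, Finset.mem_of_mem_erase hi, rfl⟩
  · by_cases h : (0 : Fin (m + 1)) ∈ P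
    · rw [if_pos h] at hc
      obtain rfl : (0 : Fin (k+1)) = c := by injection hc
      exact ⟨0, h, by rw [stOf_zero]⟩
    · rw [if_neg h] at hc; exact absurd hc (by simp)

/-- `psi` drops by at most 1 along a `b`-step. -/
lemma psi_bstep (hm : 1 ≤ m) (hk : 1 ≤ k) (U : Finset (Fin (m + 1))) (h0 : (0:Fin (m+1)) ∉ U)
    (φ : Option (Fin (k + 1))) :
    psi m k hm U φ ≤ psi m k hm U (φ.map (bPhi k)) + 1 := by
  cases φ with
  | none => exact Nat.le_succ _
  | some c =>
    rw [Option.map_some]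
    have hkv := c.isLt
    have hbv : (c.val < k ∧ (bPhi k c).val = c.val + 1) ∨ (c.val = k ∧ (bPhi k c).val = 0) := by
      by_cases hck : c.val < k
      · exact Or.inl ⟨hck, by rw [bPhi, dif_pos hck]⟩
      · exact Or.inr ⟨by omega, by rw [bPhi, dif_neg hck]; rfl⟩
    have hbm : ell m hm (insert 0 U) ≤ ell m hm (insert 2 (shiftU m U)) + 2 := by
      have := ell_bmove m hm (T := insert 0 U) (Finset.mem_insert_self _ _)
      rwa [Finset.erase_insert h0] at this
    simp only [psi]
    by_cases hU : U = ∅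
    · subst hU
      have he0 : ell m hm (insert 0 (∅ : Finset (Fin (m+1)))) = 0 :=
        ell_card_le_one m hm (by simp)
      split_ifs <;> omega
    · split_ifs <;> omega

lemma pure_cover (hm : 1 ≤ m) (w : List Bool) (p : QA m k) {U : Finset (Fin (m+1))}
    {φ : Option (Fin (k+1))} (P' : Finset (Fin (m + 1)))
    (himg : ∀ i ∈ P', ∃ x, RC m k U φ x ∧ deltaA m k x false = Sum.inl i)
    (hp : ∀ x, RC m k U φ x → actA m k x (false :: w) = p) :
    ∀ y, RC m k (P'.erase 0)
      (if (0:Fin (m+1)) ∈ P' then (some (0:Fin (k+1))) else none) y →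
      actA m k y w = p := by
  intro y hy
  obtain ⟨i, hiP, rfl⟩ := RC_pure P' y hy
  obtain ⟨x, hx, hdx⟩ := himg i hiP
  have := hp x hx
  rwa [actA_cons, hdx] at this

lemma psi_sound (hm : 1 ≤ m) (hk : 1 ≤ k) :
    ∀ (w : List Bool) (U : Finset (Fin (m + 1))) (φ : Option (Fin (k + 1))),
      (0 : Fin (m+1)) ∉ U → (∃ p, ∀ x, RC m k U φ x → actA m k x w = p) →
      psi m k hm U φ ≤ w.length := by
  intro w
  induction w with
  | nil =>
    rintro U φ h0 ⟨p, hp⟩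
    have hp' : ∀ x, RC m k U φ x → x = p := fun x hx => hp x hx
    cases φ with
    | none =>
      simp only [psi]
      have hcard : U.card ≤ 1 := Finset.card_le_one.mpr (fun a ha b hb => by
        have h1 := hp' (Sum.inl a) (Or.inl ⟨a, ha, rfl⟩)
        have h2 := hp' (Sum.inl b) (Or.inl ⟨b, hb, rfl⟩)
        rw [← h2] at h1
        exact Sum.inl.inj h1)
      rw [ell_card_le_one m hm hcard]
      exact Nat.zero_le _
    | some c =>
      by_cases hc0 : c.val = 0
      · have hU : U = ∅ := by
          rw [Finset.eq_empty_iff_forall_notMem]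
          intro i hi
          have h1 := hp' (Sum.inl i) (Or.inl ⟨i, hi, rfl⟩)
          have h2 := hp' (stOf m k c) (Or.inr ⟨c, rfl, rfl⟩)
          rw [stOf, dif_pos hc0] at h2
          rw [← h2] at h1
          have hi0 : i = 0 := Sum.inl.inj h1
          rw [hi0] at hi
          exact h0 hi
        simp only [psi]
        rw [if_pos hc0, hU,
          ell_card_le_one m hm (by simp : (insert 0 (∅ : Finset (Fin (m+1)))).card ≤ 1)]
        exact Nat.zero_le _
      · have hU : U = ∅ := by
          rw [Finset.eq_empty_iff_forall_notMem]
          intro i hi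
          have h1 := hp' (Sum.inl i) (Or.inl ⟨i, hi, rfl⟩)
          have h2 := hp' (stOf m k c) (Or.inr ⟨c, rfl, rfl⟩)
          rw [stOf, dif_neg hc0] at h2
          rw [← h2] at h1
          exact absurd h1 (by simp)
        simp only [psi]
        rw [if_neg hc0, if_pos hU]
        exact Nat.zero_le _
  | cons l w ih =>
    rintro U φ h0 ⟨p, hp⟩
    rw [List.length_cons]
    cases l with
    | true =>
      have hnext : ∀ x, RC m k U (φ.map (bPhi k)) x → actA m k x w = p := by
        intro y hy
        rcases hy with ⟨i, hi, rfl⟩ | ⟨c', hc', rfl⟩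
        · have hx := hp (Sum.inl i) (Or.inl ⟨i, hi, rfl⟩)
          rwa [actA_cons, delta_inl_b i (fun h => h0 (h ▸ hi))] at hx
        · obtain ⟨c, hcc, rfl⟩ := Option.map_eq_some_iff.mp hc'
          have hx := hp (stOf m k c) (Or.inr ⟨c, hcc, rfl⟩)
          rwa [actA_cons, delta_stOf hk c] at hx
      have hlen := ih U (φ.map (bPhi k)) h0 ⟨p, hnext⟩
      have hb := psi_bstep hm hk U h0 φ
      omega
    | false =>
      cases φ with
      | none =>
        have himg : ∀ i ∈ shiftU m U, ∃ x, RC m k U none x ∧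
            deltaA m k x false = Sum.inl i := by
          intro i hi
          obtain ⟨u, hu, rfl⟩ := Finset.mem_image.mp hi
          exact ⟨Sum.inl u, Or.inl ⟨u, hu, rfl⟩, rfl⟩
        have hcov := pure_cover hm w p (shiftU m U) himg hp
        have hlen := ih ((shiftU m U).erase 0) _ (Finset.notMem_erase _ _) ⟨p, hcov⟩
        rw [psi_pure hm (shiftU m U)] at hlen
        have hstep : psi m k hm U none ≤ ell m hm (shiftU m U) + 1 := ell_shift m hm U
        omega
      | some c =>
        by_cases hc0 : c.val = 0
        · have himg : ∀ i ∈ insert 1 (shiftU m U), ∃ x, RC m k U (some c) x ∧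
              deltaA m k x false = Sum.inl i := by
            intro i hi
            rcases Finset.mem_insert.mp hi with hi1 | hi2
            · refine ⟨Sum.inl 0, Or.inr ⟨c, rfl, by rw [stOf, dif_pos hc0]⟩, ?_⟩
              rw [hi1]
              show Sum.inl (0 + 1) = (Sum.inl 1 : QA m k)
              rw [zero_add]
            · obtain ⟨u, hu, rfl⟩ := Finset.mem_image.mp hi2
              exact ⟨Sum.inl u, Or.inl ⟨u, hu, rfl⟩, rfl⟩
          have hcov := pure_cover hm w p (insert 1 (shiftU m U)) himg hp
          have hlen := ih ((insert 1 (shiftU m U)).erase 0) _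
            (Finset.notMem_erase _ _) ⟨p, hcov⟩
          rw [psi_pure hm (insert 1 (shiftU m U))] at hlen
          have hins : (insert (0:Fin (m+1)) U).image (· + 1) = insert 1 (shiftU m U) := by
            rw [Finset.image_insert, zero_add]
            rfl
          have hstep : psi m k hm U (some c) ≤ ell m hm (insert 1 (shiftU m U)) + 1 := by
            simp only [psi]
            rw [if_pos hc0, ← hins]
            exact ell_shift m hm (insert 0 U)
          omega
        · by_cases hU : U = ∅
          · have : psi m k hm U (some c) = 0 := by
              simp only [psi]
              rw [if_neg hc0, if_pos hU]
            omega
          · have himg : ∀ i ∈ insert 2 (shiftU m U), ∃ x, RC m k U (some c) x ∧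
                deltaA m k x false = Sum.inl i := by
              intro i hi
              rcases Finset.mem_insert.mp hi with hi1 | hi2
              · refine ⟨stOf m k c, Or.inr ⟨c, rfl, rfl⟩, ?_⟩
                rw [stOf, dif_neg hc0, hi1]
                rfl
              · obtain ⟨u, hu, rfl⟩ := Finset.mem_image.mp hi2
                exact ⟨Sum.inl u, Or.inl ⟨u, hu, rfl⟩, rfl⟩
            have hcov := pure_cover hm w p (insert 2 (shiftU m U)) himg hp
            have hlen := ih ((insert 2 (shiftU m U)).erase 0) _
              (Finset.notMem_erase _ _) ⟨p, hcov⟩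
            rw [psi_pure hm (insert 2 (shiftU m U))] at hlen
            have hstep : psi m k hm U (some c) ≤ ell m hm (insert 2 (shiftU m U)) + 1 := by
              simp only [psi]
              rw [if_neg hc0, if_neg hU]
              have := min_le_left (1 + ell m hm (insert 2 (shiftU m U)))
                ((k - c.val) + ell m hm (insert 0 U))
              omega
            omega

lemma bsurj (hk : 1 ≤ k) : ∀ q : QA m k, ∃ x, deltaA m k x true = q := by
  intro q
  cases q with
  | inl i =>
    by_cases hi : i = 0
    · refine ⟨Sum.inr ⟨k - 1, by omega⟩, ?_⟩
      have hlt : ¬ ((k - 1) + 1 < k) := by omega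
      simp [deltaA, hlt, hi]
    · exact ⟨Sum.inl i, delta_inl_b i hi⟩
  | inr j =>
    by_cases hj : j.val = 0
    · refine ⟨Sum.inl 0, ?_⟩
      have h1 : deltaA m k (Sum.inl (0 : Fin (m+1))) true = Sum.inr ⟨0, by omega⟩ := by
        simp [deltaA, show 0 < k by omega]
      rw [h1]
      congr 1
      exact Fin.ext (by simp [hj])
    · refine ⟨Sum.inr ⟨j.val - 1, by have := j.isLt; omega⟩, ?_⟩
      have hlt : (j.val - 1) + 1 < k := by have := j.isLt; omega
      simp only [deltaA]
      rw [dif_pos hlt]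
      congr 1
      refine Fin.ext ?_
      show (j.val - 1) + 1 = j.val
      omega

lemma lower_bound (hm : 1 ≤ m) (hk : 1 ≤ k) :
    ∀ w : List Bool, (∃ p : QA m k, ∀ q : QA m k, actA m k q w = p) →
      m ^ 2 + 2 ≤ w.length := by
  intro w
  induction w with
  | nil =>
    rintro ⟨p, hp⟩
    have h1 : (Sum.inl 0 : QA m k) = p := hp (Sum.inl 0)
    have h2 : (Sum.inr ⟨0, by omega⟩ : QA m k) = p := hp (Sum.inr ⟨0, by omega⟩)
    rw [← h2] at h1
    exact absurd h1 (by simp)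
  | cons l w ih =>
    rintro ⟨p, hp⟩
    rw [List.length_cons]
    cases l with
    | true =>
      have hnext : ∃ p, ∀ q : QA m k, actA m k q w = p := by
        refine ⟨p, fun q => ?_⟩
        obtain ⟨x, hx⟩ := bsurj hk q
        have := hp x
        rwa [actA_cons, hx] at this
      have := ih hnext
      omega
    | false =>
      have hcov : ∀ y, RC m k (Finset.univ.erase 0) (some (0 : Fin (k+1))) y →
          actA m k y w = p := by
        intro y hy
        have hy' : ∃ i : Fin (m+1), y = Sum.inl i := by
          rcases hy with ⟨i, _, rfl⟩ | ⟨c, hc, rfl⟩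
          · exact ⟨i, rfl⟩
          · obtain rfl : (0:Fin (k+1)) = c := by injection hc
            exact ⟨0, by rw [stOf_zero]⟩
        obtain ⟨i, rfl⟩ := hy'
        have := hp (Sum.inl (i - 1))
        rwa [actA_cons, delta_inl_a, sub_add_cancel] at this
      have hps := psi_sound hm hk w (Finset.univ.erase 0) (some 0)
        (Finset.notMem_erase _ _) ⟨p, hcov⟩
      have hpsi : psi m k hm (Finset.univ.erase 0) (some (0:Fin (k+1)))
          = ell m hm Finset.univ := by
        simp only [psi]
        rw [if_pos (by simp), Finset.insert_erase (Finset.mem_univ _)]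
      have huniv := ell_univ_ge m hm
      omega


/-! ### The upper bound: `v` synchronizes -/

lemma act_append (x : QA m k) (u v : List Bool) :
    actA m k x (u ++ v) = actA m k (actA m k x u) v := by
  rw [actA, actA, actA, List.foldl_append]

lemma act_as (t : ℕ) (i : Fin (m+1)) :
    actA m k (Sum.inl i) (List.replicate t false) = Sum.inl (i + (t : Fin (m+1))) := by
  induction t generalizing i with
  | zero => simp [actA]
  | succ t ih =>
    rw [List.replicate_succ, actA_cons, delta_inl_a, ih]
    congr 1
    push_cast
    ring

lemma fin_sub_one_val (i : Fin (m+1)) (hi : i ≠ 0) : (i - 1).val = i.val - 1 := by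
  rw [Fin.coe_sub_one, if_neg hi]

lemma delta_inl0_b (hk : 1 ≤ k) :
    deltaA m k (Sum.inl (0 : Fin (m+1))) true = Sum.inr ⟨0, by omega⟩ := by
  simp [deltaA, show 0 < k by omega]

lemma act_block (hm : 1 ≤ m) (hk : 1 ≤ k) (i : Fin (m+1)) :
    actA m k (Sum.inl i) (true :: List.replicate m false)
      = Sum.inl ⟨i.val - 1, by have := i.isLt; omega⟩ := by
  by_cases hi : i = 0
  · subst hi
    rw [actA_cons, delta_inl0_b hk]
    have hrep : List.replicate m false = false :: List.replicate (m-1) false := by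
      conv_lhs => rw [show m = (m-1)+1 by omega]
      rw [List.replicate_succ]
    rw [hrep, actA_cons, delta_inr_a, act_as]
    have hA : (2 : Fin (m+1)) + ((m-1 : ℕ) : Fin (m+1)) = 0 := by
      calc (2 : Fin (m+1)) + ((m-1:ℕ) : Fin (m+1))
          = ((2 + (m-1) : ℕ) : Fin (m+1)) := by push_cast; ring
        _ = ((m+1 : ℕ) : Fin (m+1)) := by rw [show (2 + (m-1) : ℕ) = m+1 by omega]
        _ = 0 := Fin.natCast_self _
    rw [hA]
    rfl
  · rw [actA_cons, delta_inl_b i hi, act_as]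
    congr 1
    have hm0 : ((m:ℕ) : Fin (m+1)) = 0 - 1 := by
      have h : ((m:ℕ) : Fin (m+1)) + 1 = 0 := by
        calc ((m:ℕ) : Fin (m+1)) + 1 = ((m+1 : ℕ) : Fin (m+1)) := by push_cast; ring
          _ = 0 := Fin.natCast_self _
      have := eq_neg_of_add_eq_zero_left h
      rw [this]
      ring
    rw [hm0, show i + (0 - 1 : Fin (m+1)) = i - 1 by ring]
    refine Fin.ext ?_
    rw [fin_sub_one_val i hi]

lemma act_blocks (hm : 1 ≤ m) (hk : 1 ≤ k) (t : ℕ) (i : Fin (m+1)) :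
    actA m k (Sum.inl i) (List.replicate t (true :: List.replicate m false)).flatten
      = Sum.inl ⟨i.val - t, by have := i.isLt; omega⟩ := by
  induction t generalizing i with
  | zero =>
    simp only [List.replicate, List.flatten_nil]
    rfl
  | succ t ih =>
    rw [List.replicate_succ, List.flatten_cons, act_append, act_block hm hk i, ih]
    congr 1
    exact Fin.ext (by show i.val - 1 - t = i.val - (t+1); omega)

lemma act_tail (hm : 1 ≤ m) (hk : 1 ≤ k) (y : Fin (m+1)) :
    actA m k (Sum.inl y)
      ((List.replicate (m-1) (true :: List.replicate m false)).flatten ++ [true, false])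
      = Sum.inl 2 := by
  rw [act_append, act_blocks hm hk (m-1) y]
  set z : Fin (m+1) := ⟨y.val - (m-1), by have := y.isLt; omega⟩ with hzdef
  have hz : z.val = y.val - (m-1) := rfl
  by_cases hzv : z.val = 0
  · have hz0 : z = 0 := Fin.ext (by rw [hzv, Fin.val_zero])
    rw [hz0, actA_cons, delta_inl0_b hk, actA_cons, delta_inr_a]
    rfl
  · have hy := y.isLt
    have hz1 : z.val = 1 := by omega
    have hz1' : z ≠ 0 := by
      intro h
      rw [h, Fin.val_zero] at hz1
      omega
    rw [actA_cons, delta_inl_b z hz1', actA_cons, delta_inl_a]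
    show Sum.inl (z + 1) = _
    congr 1
    have hzo : z = ((1 : ℕ) : Fin (m+1)) := by
      have h := (Fin.cast_val_eq_self z).symm
      rw [hz1] at h
      exact h
    rw [hzo]
    push_cast
    exact one_add_one_eq_two

lemma v_sync (hm : 1 ≤ m) (hk : 1 ≤ k) (q : QA m k) :
    actA m k q ([false] ++ (List.replicate (m - 1)
      ([true] ++ List.replicate m false)).flatten ++ [true, false]) = Sum.inl 2 := by
  rw [List.append_assoc, act_append]
  have h1 : ∃ y : Fin (m+1), actA m k q [false] = Sum.inl y := by
    cases q with
    | inl i => exact ⟨i + 1, rfl⟩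
    | inr j => exact ⟨2, rfl⟩
  obtain ⟨y, hy⟩ := h1
  rw [hy]
  exact act_tail hm hk y

lemma v_len (hm : 1 ≤ m) :
    ([false] ++ (List.replicate (m - 1)
      ([true] ++ List.replicate m false)).flatten ++ [true, false]).length = m ^ 2 + 2 := by
  rw [List.length_append, List.length_append, List.length_flatten]
  simp only [List.map_replicate, List.sum_replicate, List.length_append,
    List.length_replicate, List.length_cons, List.length_singleton, List.length_nil,
    smul_eq_mul]
  obtain ⟨m', rfl⟩ : ∃ m', m = m' + 1 := ⟨m - 1, by omega⟩
  have h1 : m' + 1 - 1 = m' := by omega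
  rw [h1]
  ring

end Stmt17Aux


theorem stmt17 (m k : ℕ) (hm : 1 ≤ m) (hk : 1 ≤ k) :
    let v : List Bool :=
      [false] ++ (List.replicate (m - 1) ([true] ++ List.replicate m false)).flatten
        ++ [true, false]
    (∃ p : QA m k, ∀ q : QA m k, actA m k q v = p) ∧
    v.length = m ^ 2 + 2 ∧
    (∀ w : List Bool, (∃ p : QA m k, ∀ q : QA m k, actA m k q w = p) →
      v.length ≤ w.length) ∧
    v.length = ((m + k + 1) - k - 1) ^ 2 + 2 := by
  intro v
  have hlen : v.length = m ^ 2 + 2 := Stmt17Aux.v_len hm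
  refine ⟨⟨Sum.inl 2, fun q => Stmt17Aux.v_sync hm hk q⟩, hlen, ?_, ?_⟩
  · intro w hw
    have hlb := Stmt17Aux.lower_bound hm hk w hw
    omega
  · have he : m + k + 1 - k - 1 = m := by omega
    rw [he]
    exact hlen
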